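/- In module Restart, if node v is in state σ(0) at time t, then for every 0 ≤ d ≤ D, every node u with dist_G(u, v) ≤ d is in some state σ(j) with 0 ≤ j ≤ d at time t + d. -/

import Mathlib

set_option autoImplicit false

/-- The inclusive neighborhood `N⁺(v)`. -/
def closedNbhd {V : Type} (G : SimpleGraph V) (v : V) : Set V := {u | u = v ∨ G.Adj u v}

/-- One synchronous step of module Restart with states `σ 0, ..., σ (2D)` and initial
state `q0`: (1) a node sensing both a σ-state and a non-σ-state moves to `σ 0`;
(2) a node sensing only σ-states, not all equal to `σ (2D)`, moves to `σ (i_min + 1)`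
where `i_min` is the least sensed index; (3) a node sensing only `σ (2D)` exits to `q0`. -/
def RestartStep {V Q : Type} (D : ℕ) (σ : ℕ → Q) (q0 : Q) (G : SimpleGraph V)
    (c c' : V → Q) : Prop :=
  ∀ v : V,
    ((∃ u ∈ closedNbhd G v, ∃ i ≤ 2 * D, c u = σ i) →
      (∃ u ∈ closedNbhd G v, ∀ i ≤ 2 * D, c u ≠ σ i) →
      c' v = σ 0) ∧
    ((∀ u ∈ closedNbhd G v, ∃ i ≤ 2 * D, c u = σ i) →
      (∃ u ∈ closedNbhd G v, c u ≠ σ (2 * D)) →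
      ∃ i, (∃ u ∈ closedNbhd G v, c u = σ i) ∧
        (∀ j < i, ∀ u ∈ closedNbhd G v, c u ≠ σ j) ∧ c' v = σ (i + 1)) ∧
    ((∀ u ∈ closedNbhd G v, c u = σ (2 * D)) → c' v = q0)

/-- in module Restart, if node `v` is in state `σ 0` at time `t`, then
for every `0 ≤ d ≤ D`, every node `u` at distance at most `d` from `v` is in some
state `σ j` with `j ≤ d` at time `t + d`. -/
theorem stmt_13 {V Q : Type} [Fintype V] (G : SimpleGraph V) (hconn : G.Connected)
    (D : ℕ) (hdiam : ∀ u v : V, G.dist u v ≤ D)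
    (σ : ℕ → Q) (q0 : Q)
    (hinj : ∀ i j, i ≤ 2 * D → j ≤ 2 * D → σ i = σ j → i = j)
    (hq0 : ∀ i ≤ 2 * D, q0 ≠ σ i)
    (c : ℕ → V → Q)
    (hstep : ∀ t, RestartStep D σ q0 G (c t) (c (t + 1)))
    (t : ℕ) (v : V) (hv : c t v = σ 0) :
    ∀ d ≤ D, ∀ u : V, G.dist u v ≤ d → ∃ j ≤ d, c (t + d) u = σ j := by
  intro d
  induction d with
  | zero =>
    intro _ u hu
    have hreach : G.Reachable u v := hconn u v
    have : u = v := by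
      have := Nat.le_zero.mp hu
      rwa [hreach.dist_eq_zero_iff] at this
    exact ⟨0, le_refl 0, by rw [this]; simpa using hv⟩
  | succ d ih =>
    intro hd u hu
    have hd' : d ≤ D := Nat.le_of_succ_le hd
    -- find a closed-neighbor w of u with dist w v ≤ d
    obtain ⟨w, hw_mem, hw_dist⟩ : ∃ w, w ∈ closedNbhd G u ∧ G.dist w v ≤ d := by
      by_cases h : G.dist u v ≤ d
      · exact ⟨u, Or.inl rfl, h⟩
      · have heq : G.dist u v = d + 1 := le_antisymm hu (by omega)
        obtain ⟨p, hp⟩ := (hconn u v).exists_walk_length_eq_dist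
        cases p with
        | nil => simp at heq
        | cons hadj q =>
          rename_i w
          refine ⟨w, Or.inr (G.adj_symm hadj), ?_⟩
          have := SimpleGraph.dist_le q
          simp [SimpleGraph.Walk.length_cons, heq] at hp
          omega
    obtain ⟨j, hj, hwj⟩ := ih hd' w hw_dist
    obtain ⟨h1, h2, _⟩ := hstep (t + d) u
    have hj2D : j ≤ 2 * D := by omega
    by_cases hall : ∀ x ∈ closedNbhd G u, ∃ i ≤ 2 * D, c (t + d) x = σ i
    · have hne : c (t + d) w ≠ σ (2 * D) := by
        rw [hwj]; intro h
        have := hinj j (2 * D) hj2D le_rfl h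
        omega
      obtain ⟨i, ⟨x, hx, hxi⟩, hmin, hstep'⟩ := h2 hall ⟨w, hw_mem, hne⟩
      have hij : i ≤ j := by
        by_contra hcon
        exact hmin j (by omega) w hw_mem hwj
      exact ⟨i + 1, by omega, hstep'⟩
    · push_neg at hall
      obtain ⟨x, hx, hxbad⟩ := hall
      have := h1 ⟨w, hw_mem, j, hj2D, hwj⟩ ⟨x, hx, hxbad⟩
      exact ⟨0, Nat.zero_le _, this⟩
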